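/- For every n ≥ 2, let A_n = diag(1, 1, …, 1, 0) ∈ M_n(ℂ) (with n − 1 entries equal to 1 and one entry equal to 0). Then for every self-adjoint B' ∈ M_n(ℂ) with A_n ≺_tr B', one has ‖I_n − B'‖ ≥ 1. -/

import Mathlib

open scoped Matrix Matrix.Norms.L2Operator ComplexOrder

/-- Eigenvalues of a Hermitian matrix listed in non-increasing order. -/
noncomputable def sortedEigs {m : ℕ} {A : Matrix (Fin m) (Fin m) ℂ}
    (hA : A.IsHermitian) : Fin m → ℝ :=
  fun i => hA.eigenvalues (Tuple.sort hA.eigenvalues i.rev)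

/-- `Maj hA hB` means `A ≺_tr B`. -/
def Maj {m : ℕ} {A B : Matrix (Fin m) (Fin m) ℂ}
    (hA : A.IsHermitian) (hB : B.IsHermitian) : Prop :=
  (∀ l : Fin m, ∑ k ∈ Finset.Iic l, sortedEigs hA k ≤ ∑ k ∈ Finset.Iic l, sortedEigs hB k) ∧
  (∑ k, sortedEigs hA k = ∑ k, sortedEigs hB k)

lemma sortedEigs_last_le {m : ℕ} {A : Matrix (Fin (m+1)) (Fin (m+1)) ℂ}
    (hA : A.IsHermitian) (j : Fin (m+1)) :
    sortedEigs hA (Fin.last m) ≤ hA.eigenvalues j := by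
  have h := Tuple.monotone_sort hA.eigenvalues
    (Fin.zero_le ((Tuple.sort hA.eigenvalues).symm j))
  simpa [sortedEigs, Fin.rev_last, Function.comp] using h

set_option maxHeartbeats 1000000 in
theorem stmt15 (n : ℕ) (hn : 2 ≤ n)
    (hA : (Matrix.diagonal (fun i : Fin n =>
      ((if (i : ℕ) < n - 1 then 1 else 0 : ℝ) : ℂ))).IsHermitian)
    (B' : Matrix (Fin n) (Fin n) ℂ) (hB' : B'.IsHermitian)
    (hmaj : Maj hA hB') :
    1 ≤ ‖(1 : Matrix (Fin n) (Fin n) ℂ) - B'‖ := by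
  obtain ⟨m, rfl⟩ : ∃ m, n = m + 2 := ⟨n - 2, by omega⟩
  -- the smallest eigenvalue of A is ≤ 0, since det A = 0
  have hdet : (Matrix.diagonal (fun i : Fin (m+2) =>
      ((if (i : ℕ) < m + 2 - 1 then 1 else 0 : ℝ) : ℂ))).det = 0 := by
    rw [Matrix.det_diagonal]
    refine Finset.prod_eq_zero (Finset.mem_univ (Fin.last (m+1))) ?_
    simp [Fin.last]
  have hzero : ∃ j, hA.eigenvalues j = 0 := by
    have h := hA.det_eq_prod_eigenvalues
    rw [hdet] at h
    have h2 : ∏ i, hA.eigenvalues i = 0 := by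
      have hc : ((∏ i, hA.eigenvalues i : ℝ) : ℂ) = 0 := by push_cast; exact h.symm
      exact_mod_cast hc
    obtain ⟨i, _, hi⟩ := Finset.prod_eq_zero_iff.mp h2
    exact ⟨i, hi⟩
  obtain ⟨j0, hj0⟩ := hzero
  have hAmin : sortedEigs hA (Fin.last (m+1)) ≤ 0 := by
    exact le_trans (sortedEigs_last_le hA j0) (le_of_eq hj0)
  -- decomposition of the full sum
  have hsplit : ∀ (C : Matrix (Fin (m+2)) (Fin (m+2)) ℂ) (hC : C.IsHermitian),
      ∑ k, sortedEigs hC k = (∑ k ∈ Finset.Iic (⟨m, by omega⟩ : Fin (m+2)), sortedEigs hC k)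
        + sortedEigs hC (Fin.last (m+1)) := by
    intro C hC
    have huniv : (Finset.univ : Finset (Fin (m+2))) =
        insert (Fin.last (m+1)) (Finset.Iic (⟨m, by omega⟩ : Fin (m+2))) := by
      ext k
      simp only [Finset.mem_univ, Finset.mem_insert, Finset.mem_Iic, Fin.le_def, Fin.ext_iff,
        Fin.val_last, true_iff]
      omega
    rw [huniv, Finset.sum_insert (by simp [Fin.le_def])]
    ring
  -- smallest eigenvalue of B' is ≤ 0
  have hBmin : sortedEigs hB' (Fin.last (m+1)) ≤ 0 := by
    have h1 := hmaj.1 ⟨m, by omega⟩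
    have h2 := hmaj.2
    rw [hsplit _ hA, hsplit _ hB'] at h2
    linarith
  -- now use an eigenvector for the smallest eigenvalue of B'
  set i0 : Fin (m+2) := Tuple.sort hB'.eigenvalues (Fin.last (m+1)).rev with hi0
  have hβ : hB'.eigenvalues i0 ≤ 0 := hBmin
  set v := hB'.eigenvectorBasis i0 with hv
  have hv1 : ‖v‖ = 1 := hB'.eigenvectorBasis.orthonormal.1 i0
  have hle := Matrix.l2_opNorm_mulVec (1 - B') v
  simp only [Matrix.sub_mulVec, Matrix.one_mulVec] at hle
  rw [show (B' *ᵥ v : Fin (m+2) → ℂ) = hB'.eigenvalues i0 • (v : Fin (m+2) → ℂ)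
    from hB'.mulVec_eigenvectorBasis i0] at hle
  rw [show ((v : Fin (m+2) → ℂ) - hB'.eigenvalues i0 • (v : Fin (m+2) → ℂ))
      = (1 - hB'.eigenvalues i0) • (v : Fin (m+2) → ℂ) by rw [sub_smul, one_smul]] at hle
  rw [show ((1 - hB'.eigenvalues i0 : ℝ) • (v : Fin (m+2) → ℂ))
      = ((1 - hB'.eigenvalues i0 : ℝ) : ℂ) • (v : Fin (m+2) → ℂ) by
        funext k; simp [Complex.real_smul]] at hle
  rw [map_smul, norm_smul] at hle
  have hnv : ‖(EuclideanSpace.equiv (Fin (m+2)) ℂ).symm (v : Fin (m+2) → ℂ)‖ = ‖v‖ := rfl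
  rw [hnv, hv1, mul_one, mul_one, Complex.norm_real, Real.norm_eq_abs,
    abs_of_nonneg (by linarith)] at hle
  linarith
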